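/- Let n ≥ 3 and let (y_1,…,y_n, y_0, ȳ_n,…,ȳ_1) be nonnegative integers with y_1·ȳ_1 = 0 and y_0 + Σ_{i=1}^n (y_i + ȳ_i) = l. Define x_1 = y_1 + min(y_2, ȳ_2); x_i = (y_i − ȳ_i)_+ + min(y_{i+1}, ȳ_{i+1}) for 2 ≤ i ≤ n−1; x_n = (y_n − ȳ_n)_+ + ⌊y_0/2⌋; x_0 = y_0 − 2⌊y_0/2⌋; x̄_n = (ȳ_n − y_n)_+ + ⌊y_0/2⌋; x̄_i = (ȳ_i − y_i)_+ + min(y_{i+1}, ȳ_{i+1}) for 2 ≤ i ≤ n−1; x̄_1 = ȳ_1 + min(y_2, ȳ_2). Then applying the 'prime' map to (x_1,…,x_n, x_0, x̄_n,…,x̄_1) — namely x'_1 = (x_1 − x̄_1)_+, x'_i = (x_i − x̄_i)_+ + min(x_{i−1}, x̄_{i−1}) for 2 ≤ i ≤ n, x'_0 = x_0 + 2·min(x_n, x̄_n), x̄'_i = (x̄_i − x_i)_+ + min(x_{i−1}, x̄_{i−1}) for 2 ≤ i ≤ n, x̄'_1 = (x̄_1 − x_1)_+ — recovers the original tuple: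 x'_i = y_i and x̄'_i = ȳ_i for 1 ≤ i ≤ n, and x'_0 = y_0. (That is, ψ ∘ φ = id for type B_n^{(1)}.) -/
import Mathlib


/-- The primed coordinate `x'_i` of the map `ψ` for type `B_n^{(1)}`. -/
def xprime (x xb : ℕ → ℕ) (i : ℕ) : ℕ :=
  if i = 1 then x 1 - xb 1 else (x i - xb i) + min (x (i - 1)) (xb (i - 1))

def xbprime (x xb : ℕ → ℕ) (i : ℕ) : ℕ :=
  if i = 1 then xb 1 - x 1 else (xb i - x i) + min (x (i - 1)) (xb (i - 1))

def x0prime (n : ℕ) (x xb : ℕ → ℕ) (x0 : ℕ) : ℕ := x0 + 2 * min (x n) (xb n)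

/-- The coordinate `x_i` of the map `φ` for type `B_n^{(1)}` applied to `(y, y₀, ȳ)`. -/
def phiMapX (n : ℕ) (y yb : ℕ → ℕ) (y0 : ℕ) (i : ℕ) : ℕ :=
  if i = 1 then y 1 + min (y 2) (yb 2)
  else if i = n then (y n - yb n) + y0 / 2
  else (y i - yb i) + min (y (i + 1)) (yb (i + 1))

def phiMapXb (n : ℕ) (y yb : ℕ → ℕ) (y0 : ℕ) (i : ℕ) : ℕ :=
  if i = 1 then yb 1 + min (y 2) (yb 2)
  else if i = n then (yb n - y n) + y0 / 2
  else (yb i - y i) + min (y (i + 1)) (yb (i + 1))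

def phiMapX0 (y0 : ℕ) : ℕ := y0 - 2 * (y0 / 2)

theorem stmt_12 (n l : ℕ) (hn : 3 ≤ n)
    (y yb : ℕ → ℕ) (y0 : ℕ) (hy1 : y 1 * yb 1 = 0)
    (hsum : y0 + ∑ i ∈ Finset.Icc 1 n, (y i + yb i) = l) :
    (∀ i, 1 ≤ i → i ≤ n →
      xprime (phiMapX n y yb y0) (phiMapXb n y yb y0) i = y i ∧
      xbprime (phiMapX n y yb y0) (phiMapXb n y yb y0) i = yb i) ∧
    x0prime n (phiMapX n y yb y0) (phiMapXb n y yb y0) (phiMapX0 y0) = y0 := by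
  have hy : y 1 = 0 ∨ yb 1 = 0 := Nat.mul_eq_zero.mp hy1
  constructor
  · intro i hi1 hin
    by_cases h1 : i = 1
    · subst h1
      simp [xprime, xbprime, phiMapX, phiMapXb, show (1:ℕ) ≠ n by omega]
      omega
    · by_cases h2 : i = n
      · subst h2
        simp [xprime, xbprime, phiMapX, phiMapXb, h1,
          show i - 1 ≠ 1 by omega, show i - 1 ≠ i by omega,
          show i - 1 + 1 = i by omega]
        omega
      · by_cases h3 : i = 2
        · subst h3
          simp [xprime, xbprime, phiMapX, phiMapXb, h2, show (3:ℕ) ≠ n ∨ True from Or.inr trivial]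
          omega
        · simp [xprime, xbprime, phiMapX, phiMapXb, h1, h2,
            show i - 1 ≠ 1 by omega, show i - 1 ≠ n by omega,
            show i - 1 + 1 = i by omega]
          omega
  · simp [x0prime, phiMapX, phiMapXb, phiMapX0, show n ≠ 1 by omega]
    omega
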